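/- A map f of finite topological spaces is closed (equivalently, proper) if and only if f has the right lifting property with respect to the inclusion {o} → {o → c} of the open point into the Sierpiński space. -/

import Mathlib

open Topology

attribute [local instance] Classical.propDecidable

/-- `HasLift i p`: the map `i` has the left lifting property with respect to `p`
(equivalently, `p` has the right lifting property with respect to `i`). -/
def HasLift {A B X Y : Type*} [TopologicalSpace A] [TopologicalSpace B]
    [TopologicalSpace X] [TopologicalSpace Y] (i : C(A, B)) (p : C(X, Y)) : Prop :=
  ∀ (f : C(A, X)) (g : C(B, Y)), p.comp f = g.comp i →
    ∃ d : C(B, X), d.comp i = f ∧ p.comp d = g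

/-- Any set of propositions containing `True` whenever it contains `False` is open
in the Sierpiński topology. -/
lemma isOpen_prop_aux {S : Set Prop} (h : False ∈ S → True ∈ S) : IsOpen S := by
  by_cases hF : False ∈ S
  · have : S = Set.univ := Set.eq_univ_of_forall fun p => by
      by_cases hp : p
      · rw [eq_true hp]; exact h hF
      · rw [eq_false hp]; exact hF
    rw [this]; exact isOpen_univ
  · by_cases hT : True ∈ S
    · have : S = {True} := by
        ext p
        constructor
        · intro hp
          by_cases hp' : p
          · simp [eq_true hp']
          · rw [eq_false hp'] at hp; exact absurd hp hF
        · intro hp; rw [Set.mem_singleton_iff] at hp; rw [hp]; exact hT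
      rw [this]; exact isOpen_singleton_true
    · have : S = ∅ := by
        ext p
        simp only [Set.mem_empty_iff_false, iff_false]
        intro hp
        by_cases hp' : p
        · rw [eq_true hp'] at hp; exact hT hp
        · rw [eq_false hp'] at hp; exact hF hp
      rw [this]; exact isOpen_empty

/-- A map out of the Sierpiński space determined by a specialization is continuous. -/
lemma continuous_ite_prop {α : Type*} [TopologicalSpace α] {x x' : α}
    (h : x' ∈ closure ({x} : Set α)) :
    Continuous (fun p : Prop => if p then x else x') := by
  rw [continuous_def]
  intro U hU
  apply isOpen_prop_aux
  intro hF
  rw [Set.mem_preimage, if_neg not_false] at hF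
  rw [Set.mem_preimage, if_pos trivial]
  rcases mem_closure_iff.mp h U hU hF with ⟨z, hz, hz'⟩
  rw [Set.mem_singleton_iff] at hz'
  rwa [← hz']

/-- In the Sierpiński space, `False` is in the closure of `{True}`. -/
lemma false_mem_closure_true : (False : Prop) ∈ closure ({True} : Set Prop) := by
  rw [mem_closure_iff_nhds]
  intro t ht
  rw [nhds_false, Filter.mem_top] at ht
  subst ht
  exact ⟨True, Set.mem_univ _, rfl⟩

/-- A map of finite topological spaces is closed (equivalently, proper) iff it has the
right lifting property with respect to the inclusion `{o} → {o → c}` of the open point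
into the Sierpiński space. -/
theorem stmt17 {X Y : Type*} [TopologicalSpace X] [TopologicalSpace Y]
    [Finite X] [Finite Y] (f : C(X, Y)) :
    IsClosedMap f ↔ HasLift (⟨fun _ => True, continuous_const⟩ : C(PUnit, Prop)) f := by
  constructor
  · intro hf f0 g hcomm
    set x : X := f0 PUnit.unit with hx
    have hgt : g True = f x := by
      have := congrFun (congrArg DFunLike.coe hcomm) PUnit.unit
      simpa using this.symm
    have hspec : g False ∈ closure ({f x} : Set Y) := by
      rw [← hgt]
      exact map_mem_closure g.continuous false_mem_closure_true
        (fun z hz => by rw [Set.mem_singleton_iff] at hz; rw [hz]; rfl)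
    have hclos : closure ({f x} : Set Y) ⊆ f '' closure {x} := by
      have h1 : IsClosed (f '' closure {x}) := hf _ isClosed_closure
      apply closure_minimal _ h1
      exact Set.singleton_subset_iff.mpr ⟨x, subset_closure rfl, rfl⟩
    obtain ⟨x', hx', hfx'⟩ := hclos hspec
    refine ⟨⟨fun p => if p then x else x', continuous_ite_prop hx'⟩, ?_, ?_⟩
    · ext u; simp; rfl
    · ext p
      by_cases hp : p
      · simp [eq_true hp, hgt]
      · simp [eq_false hp, hfx']
  · intro hl
    have key : ∀ (x : X) (y : Y), y ∈ closure ({f x} : Set Y) →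
        ∃ x', x' ∈ closure ({x} : Set X) ∧ f x' = y := by
      intro x y hy
      have hgcont : Continuous (fun p : Prop => if p then f x else y) :=
        continuous_ite_prop hy
      obtain ⟨d, hd1, hd2⟩ := hl ⟨fun _ => x, continuous_const⟩ ⟨_, hgcont⟩ (by ext u; simp)
      have hdT : d True = x := by
        have := congrFun (congrArg DFunLike.coe hd1) PUnit.unit
        simpa using this
      refine ⟨d False, ?_, ?_⟩
      · rw [← hdT]
        exact map_mem_closure d.continuous false_mem_closure_true
          (fun z hz => by rw [Set.mem_singleton_iff] at hz; rw [hz]; rfl)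
      · have := congrFun (congrArg DFunLike.coe hd2) False
        simpa using this
    intro C hC
    apply isClosed_of_closure_subset
    intro y hy
    have hfin : (f '' C).Finite := Set.toFinite _
    have : f '' C = ⋃ z ∈ f '' C, ({z} : Set Y) := (Set.biUnion_of_singleton _).symm
    rw [this, hfin.closure_biUnion] at hy
    simp only [Set.mem_iUnion] at hy
    obtain ⟨z, ⟨x, hxC, rfl⟩, hyz⟩ := hy
    obtain ⟨x', hx', rfl⟩ := key x y hyz
    exact ⟨x', hC.closure_subset (closure_mono (Set.singleton_subset_iff.mpr hxC) hx'), rfl⟩
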